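/- If (ℬ ⊆ 𝒜, E) is a subalgebra system admitting a (not necessarily orthogonal) Pimsner–Popa basis with d elements, then Aᵗ ñ ≤ d m̃ entrywise, where A is the inclusion matrix and ñ, m̃ the dimension vectors. -/

import Mathlib

open Finset Matrix

/-- The unital inclusion of the multi-matrix algebra ℬ = ⊕_j M_{m_j} into
𝒜 = ⊕_i M_{n_i}, where M_{m_j} appears a_{ij} times in the i-th summand. -/
def multiMatrixIncl (s r : ℕ) (m : Fin r → ℕ) (a : Fin s → Fin r → ℕ)
    (Y : ∀ j, Matrix (Fin (m j)) (Fin (m j)) ℂ) :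
    ∀ i, Matrix ((j : Fin r) × (Fin (a i j) × Fin (m j)))
      ((j : Fin r) × (Fin (a i j) × Fin (m j))) ℂ :=
  fun i p q =>
    if h : p.1 = q.1 then
      (if (h ▸ p.2).1 = q.2.1 then Y q.1 ((h ▸ p.2).2) q.2.2 else 0)
    else 0

/-- If a subalgebra system (ℬ ⊆ 𝒜, E) admits a (not necessarily orthogonal)
Pimsner–Popa basis with d elements, then Aᵗ ñ ≤ d m̃ entrywise. -/
lemma multiMatrixIncl_apply_same (s r : ℕ) (m : Fin r → ℕ) (a : Fin s → Fin r → ℕ)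
    (Y : ∀ j, Matrix (Fin (m j)) (Fin (m j)) ℂ) (i : Fin s) (j : Fin r)
    (c c' : Fin (a i j)) (y y' : Fin (m j)) :
    multiMatrixIncl s r m a Y i ⟨j, (c, y)⟩ ⟨j, (c', y')⟩
      = if c = c' then Y j y y' else 0 := by
  simp [multiMatrixIncl]

lemma multiMatrixIncl_apply_ne (s r : ℕ) (m : Fin r → ℕ) (a : Fin s → Fin r → ℕ)
    (Y : ∀ j, Matrix (Fin (m j)) (Fin (m j)) ℂ) (i : Fin s) {j j' : Fin r}
    (h : j ≠ j') (p : Fin (a i j) × Fin (m j)) (q : Fin (a i j') × Fin (m j')) :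
    multiMatrixIncl s r m a Y i ⟨j, p⟩ ⟨j', q⟩ = 0 := by
  simp [multiMatrixIncl, h]

/-- Key computation: a column of `U * ι(Z)` in the `j`-block depends only on `Z j`. -/
lemma mul_multiMatrixIncl_apply (s r : ℕ) (m : Fin r → ℕ) (a : Fin s → Fin r → ℕ)
    (Z : ∀ j, Matrix (Fin (m j)) (Fin (m j)) ℂ) (i : Fin s)
    (U : Matrix ((j : Fin r) × (Fin (a i j) × Fin (m j)))
      ((j : Fin r) × (Fin (a i j) × Fin (m j))) ℂ)
    (p : (j : Fin r) × (Fin (a i j) × Fin (m j))) (j : Fin r)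
    (c : Fin (a i j)) (y : Fin (m j)) :
    (U * multiMatrixIncl s r m a Z i) p ⟨j, (c, y)⟩
      = ∑ y', U p ⟨j, (c, y')⟩ * Z j y' y := by
  rw [Matrix.mul_apply, ← Finset.univ_sigma_univ, Finset.sum_sigma]
  rw [Finset.sum_eq_single j]
  · rw [Fintype.sum_prod_type]
    rw [Finset.sum_comm]
    simp only [multiMatrixIncl_apply_same, mul_ite, mul_zero]
    simp [Finset.sum_ite_eq']
  · intro j' _ hj'
    apply Finset.sum_eq_zero
    intro q _
    rw [multiMatrixIncl_apply_ne s r m a Z i hj', mul_zero]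
  · intro h; exact absurd (Finset.mem_univ j) h

theorem pimsner_popa_basis_ineq
    (s r d : ℕ) (n : Fin s → ℕ) (m : Fin r → ℕ) (a : Fin s → Fin r → ℕ)
    (hn : ∀ i, 0 < n i) (hm : ∀ j, 0 < m j)
    (hdim : ∀ i, ∑ j, a i j * m j = n i)  -- A m̃ = ñ
    (E : (∀ i, Matrix ((j : Fin r) × (Fin (a i j) × Fin (m j)))
            ((j : Fin r) × (Fin (a i j) × Fin (m j))) ℂ) →ₗ[ℂ]
          (∀ j, Matrix (Fin (m j)) (Fin (m j)) ℂ))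
    -- E is a conditional expectation onto ℬ
    (hEfix : ∀ Y, E (multiMatrixIncl s r m a Y) = Y)
    (hEbim : ∀ Y Z X, E (multiMatrixIncl s r m a Y * X * multiMatrixIncl s r m a Z)
      = Y * E X * Z)
    -- a Pimsner–Popa basis with d elements
    (W : Fin d → ∀ i, Matrix ((j : Fin r) × (Fin (a i j) × Fin (m j)))
          ((j : Fin r) × (Fin (a i j) × Fin (m j))) ℂ)
    (hbasis : ∀ X, X = ∑ t, W t * multiMatrixIncl s r m a (E (star (W t) * X))) :
    ∀ j, ∑ i, a i j * n i ≤ d * m j := by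
  intro j
  classical
  -- the linear map from d copies of M_{m_j} onto the j-column-block of 𝒜
  let F : (Fin d → Matrix (Fin (m j)) (Fin (m j)) ℂ) →ₗ[ℂ]
      (∀ i, Matrix ((j' : Fin r) × (Fin (a i j') × Fin (m j')))
        (Fin (a i j) × Fin (m j)) ℂ) :=
    { toFun := fun Y i p c => ∑ t, ∑ y', W t i p ⟨j, (c.1, y')⟩ * Y t y' c.2
      map_add' := by
        intro Y Z
        funext i p c
        simp [Pi.add_apply, Matrix.add_apply, mul_add, Finset.sum_add_distrib]
        rfl
      map_smul' := by
        intro k Y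
        funext i p c
        simp [Finset.mul_sum, mul_left_comm]
        change _ = k * ∑ t, ∑ y', W t i p ⟨j, (c.1, y')⟩ * Y t y' c.2
        simp [Finset.mul_sum] }
  have hsurj : Function.Surjective F := by
    intro M
    -- extend M by zero to an element of 𝒜 supported on the j-column-block
    let X : ∀ i, Matrix ((j' : Fin r) × (Fin (a i j') × Fin (m j')))
        ((j' : Fin r) × (Fin (a i j') × Fin (m j'))) ℂ :=
      fun i p q => if h : q.1 = j then M i p (h ▸ q.2) else 0
    refine ⟨fun t => E (star (W t) * X) j, ?_⟩
    funext i p c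
    have hX : X i p ⟨j, c⟩ = M i p c := by simp [X]
    have hb := congrFun (congrFun (congrFun (hbasis X) i) p) ⟨j, c⟩
    rw [hX] at hb
    have hsum : (∑ t, W t * multiMatrixIncl s r m a (E (star (W t) * X))) i p ⟨j, c⟩
        = ∑ t, (W t * multiMatrixIncl s r m a (E (star (W t) * X))) i p ⟨j, c⟩ := by
      simp [Finset.sum_apply, Matrix.sum_apply]
    rw [hsum] at hb
    show (∑ t, ∑ y', W t i p ⟨j, (c.1, y')⟩ * E (star (W t) * X) j y' c.2) = M i p c
    rw [hb]
    apply Finset.sum_congr rfl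
    intro t _
    have := mul_multiMatrixIncl_apply s r m a (E (star (W t) * X)) i (W t i) p j c.1 c.2
    simp only [Pi.mul_apply] at this ⊢
    rw [← this]
  -- dimension count
  have hle := LinearMap.finrank_range_le F
  rw [LinearMap.range_eq_top.mpr hsurj, finrank_top] at hle
  rw [Module.finrank_pi_fintype, Module.finrank_pi_fintype] at hle
  simp only [Module.finrank_matrix, Module.finrank_self, Fintype.card_sigma,
    Fintype.card_prod, Fintype.card_fin, mul_one, Finset.sum_const, Finset.card_univ] at hle
  -- hle : ∑ i, (∑ j', a i j' * m j') * (a i j * m j) ≤ d * (m j * m j)  (roughly)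
  have key : (∑ i, a i j * n i) * m j ≤ (d * m j) * m j := by
    calc (∑ i, a i j * n i) * m j = ∑ i, n i * (a i j * m j) := by
          rw [Finset.sum_mul]; apply Finset.sum_congr rfl; intro i _; ring
      _ ≤ d * (m j * m j) := by
          simp only [smul_eq_mul, hdim] at hle
          exact hle
      _ = (d * m j) * m j := by ring
  exact Nat.le_of_mul_le_mul_right key (hm j)
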